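/- Let a, b ∈ ℤ with a ≠ b. The Cayley digraph Cay(ℤ; a, b) has two arc-disjoint two-way infinite hamiltonian paths if and only if a and b are both odd and either {a, b} = {1, −1} or a + b = ±2. -/

import Mathlib

/-- `v : ℤ → G` is a two-way infinite hamiltonian path of the Cayley digraph
`Cay(G; a, b)`. -/
def IsZHamPath {G : Type*} [AddCommGroup G] (a b : G) (v : ℤ → G) : Prop :=
  Function.Bijective v ∧ ∀ i : ℤ, v (i + 1) - v i ∈ ({a, b} : Set G)

/-- The arc set of a two-way infinite path. -/
def ZArcSet {G : Type*} (v : ℤ → G) : Set (G × G) :=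
  {p | ∃ i : ℤ, p = (v i, v (i + 1))}

def pthv (σ c : ℤ) : ℤ → ℤ := fun i => if Even i then σ * i else σ * (i - 1) + c

lemma pthv_parity {σ c : ℤ} (hσ : σ = 1 ∨ σ = -1) (hc : Odd c) (i : ℤ) :
    (Even (pthv σ c i) ↔ Even i) := by
  obtain ⟨t, ht⟩ := hc
  unfold pthv
  split_ifs with hi <;> rcases hσ with h | h <;> subst h <;>
    simp only [Int.even_iff] at * <;> omega

lemma pthv_bij {σ c : ℤ} (hσ : σ = 1 ∨ σ = -1) (hc : Odd c) :
    Function.Bijective (pthv σ c) := by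
  obtain ⟨t, ht⟩ := hc
  constructor
  · intro i j hij
    unfold pthv at hij
    rcases hσ with h | h <;> subst h <;>
      split_ifs at hij <;>
      simp only [Int.even_iff, Int.not_even_iff] at * <;> omega
  · intro x
    by_cases hx : Even x
    · refine ⟨σ * x, ?_⟩
      have h1 : Even (σ * x) := hx.mul_left σ
      simp only [pthv, if_pos h1]
      rcases hσ with h | h <;> subst h <;> ring
    · refine ⟨σ * (x - c) + 1, ?_⟩
      have h1 : ¬ Even (σ * (x - c) + 1) := by
        rcases hσ with h | h <;> subst h <;>
          simp only [Int.even_iff] at * <;> omega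
      simp only [pthv, if_neg h1]
      rcases hσ with h | h <;> subst h <;> ring

lemma pthv_step {σ c d : ℤ} (hσ : σ = 1 ∨ σ = -1) (hs : c + d = 2 * σ) (i : ℤ) :
    pthv σ c (i + 1) - pthv σ c i = if Even i then c else d := by
  by_cases hi : Even i
  · have h1 : ¬ Even (i + 1) := by simp [Int.even_iff] at *; omega
    simp only [pthv, if_pos hi, if_neg h1, add_sub_cancel_right]
    ring
  · have h1 : Even (i + 1) := by simp [Int.even_iff, Int.odd_iff] at *; omega
    simp only [pthv, if_neg hi, if_pos h1]
    rcases hσ with h | h <;> subst h <;> ring_nf <;> omega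

lemma pthv_ham {σ a b : ℤ} (hσ : σ = 1 ∨ σ = -1) (ha : Odd a) (hs : a + b = 2 * σ) :
    IsZHamPath a b (pthv σ a) := by
  refine ⟨pthv_bij hσ ha, fun i => ?_⟩
  rw [pthv_step hσ hs i]
  by_cases hi : Even i <;> simp [hi]

lemma construct {a b : ℤ} (hab : a ≠ b) (ha : Odd a) (hb : Odd b) (σ : ℤ)
    (hσ : σ = 1 ∨ σ = -1) (hs : a + b = 2 * σ) :
    ∃ v v' : ℤ → ℤ, IsZHamPath a b v ∧ IsZHamPath a b v' ∧
      Disjoint (ZArcSet v) (ZArcSet v') := by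
  refine ⟨pthv σ a, pthv σ b, pthv_ham hσ ha hs, ?_, ?_⟩
  · have h2 : IsZHamPath b a (pthv σ b) := pthv_ham hσ hb (by omega)
    exact ⟨h2.1, fun i => by have := h2.2 i; rwa [Set.pair_comm b a] at this⟩
  · rw [Set.disjoint_left]
    rintro ⟨x, y⟩ ⟨i, hi⟩ ⟨j, hj⟩
    simp only [Prod.mk.injEq] at hi hj
    obtain ⟨hi1, hi2⟩ := hi
    obtain ⟨hj1, hj2⟩ := hj
    -- parities
    have hpi : Even (pthv σ a i) ↔ Even i := pthv_parity hσ ha i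
    have hpj : Even (pthv σ b j) ↔ Even j := pthv_parity hσ hb j
    have hparity : Even i ↔ Even j := by
      rw [← hpi, ← hpj, ← hi1, ← hj1]
    by_cases hie : Even i
    · have hje : Even j := hparity.mp hie
      have e1 : pthv σ a i = σ * i := by simp [pthv, hie]
      have e2 : pthv σ b j = σ * j := by simp [pthv, hje]
      have hij : i = j := by
        have : σ * i = σ * j := by rw [← e1, ← e2]; exact hi1.symm.trans hj1
        rcases hσ with h | h <;> subst h <;> omega
      subst hij
      have s1 := pthv_step hσ hs i
      have s2 := pthv_step hσ (by omega : b + a = 2 * σ) i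
      rw [if_pos hie] at s1 s2
      apply hab
      have : pthv σ a (i+1) = pthv σ b (i+1) := hi2.symm.trans hj2
      omega
    · have hje : ¬ Even j := fun h => hie (hparity.mpr h)
      have h1 : Even (i + 1) := by simp [Int.even_iff, Int.odd_iff] at *; omega
      have h2 : Even (j + 1) := by simp [Int.even_iff, Int.odd_iff] at *; omega
      have e1 : pthv σ a (i+1) = σ * (i+1) := by simp [pthv, h1]
      have e2 : pthv σ b (j+1) = σ * (j+1) := by simp [pthv, h2]
      have hij : i = j := by
        have : σ * (i+1) = σ * (j+1) := by rw [← e1, ← e2]; exact hi2.symm.trans hj2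
        rcases hσ with h | h <;> subst h <;> omega
      subst hij
      apply hab
      have e3 : pthv σ a i = σ * (i - 1) + a := by simp [pthv, hie]
      have e4 : pthv σ b i = σ * (i - 1) + b := by simp [pthv, hje]
      have : pthv σ a i = pthv σ b i := hi1.symm.trans hj1
      omega

lemma construct_pm : ∃ v v' : ℤ → ℤ, IsZHamPath 1 (-1) v ∧ IsZHamPath 1 (-1) v' ∧
    Disjoint (ZArcSet v) (ZArcSet v') := by
  refine ⟨fun i => i, fun i => -i, ⟨Function.bijective_id, fun i => by simp⟩,
    ⟨(Equiv.neg ℤ).bijective, fun i => ?_⟩, ?_⟩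
  · have h : -(i+1) - (-i) = -1 := by ring
    rw [h]; simp
  rw [Set.disjoint_left]
  rintro ⟨x, y⟩ ⟨i, hi⟩ ⟨j, hj⟩
  simp only [Prod.mk.injEq] at hi hj
  omega

lemma ham_swap {a b : ℤ} {v : ℤ → ℤ} (h : IsZHamPath a b v) : IsZHamPath b a v :=
  ⟨h.1, fun i => by have := h.2 i; rwa [Set.pair_comm a b] at this⟩

theorem telescope (g : ℤ → ℤ) (m n : ℤ) (h : m ≤ n) :
    ∑ i ∈ Finset.Ico m n, (g (i+1) - g i) = g n - g m := by
  have key : ∀ k : ℕ, ∑ i ∈ Finset.Ico m (m + k), (g (i+1) - g i) = g (m + k) - g m := by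
    intro k
    induction k with
    | zero => simp
    | succ k ih =>
      have h1 : (m + ((k+1 : ℕ)) : ℤ) = (m + k) + 1 := by push_cast; ring
      have h2 : Finset.Ico m (m + k + 1) = insert (m + (k:ℤ)) (Finset.Ico m (m + k)) := by
        ext x; simp only [Finset.mem_Ico, Finset.mem_insert]; omega
      rw [h1, h2, Finset.sum_insert (by simp)]
      rw [ih]; ring
  have hn : n = m + ((n - m).toNat : ℤ) := by omega
  rw [hn]; exact key _

noncomputable def stp (v : ℤ → ℤ) (x : ℤ) : ℤ := v (Function.invFun v x + 1) - x

def cc (x : ℤ) : ℤ := if 1 ≤ x then 1 else 0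

lemma cc01 (x : ℤ) : cc x = 0 ∨ cc x = 1 := by unfold cc; split_ifs <;> simp

lemma stp_mem {a b : ℤ} {v : ℤ → ℤ} (hv : IsZHamPath a b v) (x : ℤ) :
    stp v x = a ∨ stp v x = b := by
  have h1 : v (Function.invFun v x) = x := Function.invFun_eq (hv.1.2 x)
  have h2 := hv.2 (Function.invFun v x)
  rw [h1] at h2
  simpa [stp] using h2

lemma stp_apply {v : ℤ → ℤ} (hv : Function.Bijective v) (i : ℤ) :
    v i + stp v (v i) = v (i + 1) := by
  have h1 : Function.invFun v (v i) = i := Function.leftInverse_invFun hv.1 i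
  simp [stp, h1]

lemma mem_arc {v : ℤ → ℤ} (hv : Function.Bijective v) (x : ℤ) :
    (x, x + stp v x) ∈ ZArcSet v := by
  refine ⟨Function.invFun v x, ?_⟩
  have h1 : v (Function.invFun v x) = x := Function.invFun_eq (hv.2 x)
  rw [Prod.mk.injEq]
  constructor
  · exact h1.symm
  · simp [stp, h1]

lemma crossing {a b : ℤ} {v : ℤ → ℤ} (hv : IsZHamPath a b v) {M : ℤ}
    (hMa : -M ≤ a ∧ a ≤ M) (hMb : -M ≤ b ∧ b ≤ M) :
    ∃ ε : ℤ, (ε = 1 ∨ ε = -1) ∧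
      ∑ x ∈ Finset.Icc (-M) (M+1), (cc (x + stp v x) - cc x) = ε := by
  set K := Finset.Icc (-M) (M+1) with hK
  set I₀ : ℤ := 1 + ∑ x ∈ K, |Function.invFun v x| with hI₀
  have h0 : 1 ≤ I₀ := by
    have : (0:ℤ) ≤ ∑ x ∈ K, |Function.invFun v x| :=
      Finset.sum_nonneg (fun x _ => abs_nonneg _)
    omega
  have hIdx : ∀ x ∈ K, -I₀ < Function.invFun v x ∧ Function.invFun v x < I₀ := by
    intro x hx
    have h1 : |Function.invFun v x| ≤ ∑ y ∈ K, |Function.invFun v y| :=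
      Finset.single_le_sum (fun y _ => abs_nonneg (Function.invFun v y)) hx
    rw [abs_le] at h1
    omega
  have hbound : ∀ i : ℤ, v (i+1) - v i = a ∨ v (i+1) - v i = b := by
    intro i; simpa using hv.2 i
  have hinv : ∀ i : ℤ, Function.invFun v (v i) = i :=
    Function.leftInverse_invFun hv.1.1
  -- support of the telescoping terms
  have hsupp : ∀ i : ℤ, cc (v (i+1)) - cc (v i) ≠ 0 → v i ∈ K := by
    intro i hne
    rcases hbound i with hd | hd <;>
    · simp only [cc] at hne
      simp only [hK, Finset.mem_Icc]
      split_ifs at hne <;> omega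
  have hzero : ∀ i : ℤ, (I₀ ≤ i ∨ i ≤ -I₀) → cc (v (i+1)) - cc (v i) = 0 := by
    intro i hi
    by_contra hne
    have h1 := hIdx (v i) (hsupp i hne)
    rw [hinv i] at h1
    omega
  -- cc (v I) stabilizes
  have hstab : ∀ I : ℤ, I₀ ≤ I → cc (v I) = cc (v I₀) := by
    intro I hI
    have : ∑ i ∈ Finset.Ico I₀ I, (cc (v (i+1)) - cc (v i)) = cc (v I) - cc (v I₀) :=
      telescope (fun j => cc (v j)) I₀ I hI
    rw [Finset.sum_eq_zero (fun i hi => hzero i (by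
      simp only [Finset.mem_Ico] at hi; omega))] at this
    omega
  have hstab' : ∀ I : ℤ, I₀ ≤ I → cc (v (-I)) = cc (v (-I₀)) := by
    intro I hI
    have : ∑ i ∈ Finset.Ico (-I) (-I₀), (cc (v (i+1)) - cc (v i)) = cc (v (-I₀)) - cc (v (-I)) :=
      telescope (fun j => cc (v j)) (-I) (-I₀) (by omega)
    rw [Finset.sum_eq_zero (fun i hi => hzero i (by
      simp only [Finset.mem_Ico] at hi; omega))] at this
    omega
  -- the two tails have opposite signs
  have hcard : ∀ (S : Finset ℤ), (∀ x ∈ S, Function.invFun v x ∈ Finset.Ioo (-I₀) I₀) →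
      S.card ≤ (Finset.Ioo (-I₀) I₀).card := by
    intro S hS
    apply Finset.card_le_card_of_injOn (Function.invFun v) hS
    intro x _ y _ hxy
    have := congrArg v hxy
    rwa [Function.invFun_eq (hv.1.2 x), Function.invFun_eq (hv.1.2 y)] at this
  have hne : cc (v I₀) ≠ cc (v (-I₀)) := by
    intro heq
    rcases cc01 (v I₀) with h1 | h1
    · -- both tails ≤ 0 : positive integers have bounded preimage indices
      have hup : ∀ x : ℤ, 1 ≤ x → Function.invFun v x ∈ Finset.Ioo (-I₀) I₀ := by
        intro x hx
        have hvx : v (Function.invFun v x) = x := Function.invFun_eq (hv.1.2 x)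
        by_contra hmem
        simp only [Finset.mem_Ioo, not_and_or, not_lt] at hmem
        have hcc : cc x = 1 := by simp [cc, hx]
        rcases hmem with hm | hm
        · have := hstab' (-(Function.invFun v x)) (by omega)
          rw [show -(-(Function.invFun v x)) = Function.invFun v x by ring, hvx] at this
          rw [← heq] at this; omega
        · have := hstab (Function.invFun v x) hm
          rw [hvx] at this; omega
      have := hcard (Finset.Icc 1 (2*I₀)) (fun x hx => hup x (by
        simp only [Finset.mem_Icc] at hx; omega))
      rw [Int.card_Icc, Int.card_Ioo] at this
      omega
    · -- cc (v I₀) = 1, so both tails ≥ 1 : nonpositive integers bounded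
      have hup : ∀ x : ℤ, x ≤ 0 → Function.invFun v x ∈ Finset.Ioo (-I₀) I₀ := by
        intro x hx
        have hvx : v (Function.invFun v x) = x := Function.invFun_eq (hv.1.2 x)
        by_contra hmem
        simp only [Finset.mem_Ioo, not_and_or, not_lt] at hmem
        have hcc : cc x = 0 := by simp [cc]; omega
        rcases hmem with hm | hm
        · have := hstab' (-(Function.invFun v x)) (by omega)
          rw [show -(-(Function.invFun v x)) = Function.invFun v x by ring, hvx] at this
          rw [← heq] at this; omega
        · have := hstab (Function.invFun v x) hm
          rw [hvx] at this; omega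
      have := hcard (Finset.Icc (1 - 2*I₀) 0) (fun x hx => hup x (by
        simp only [Finset.mem_Icc] at hx; omega))
      rw [Int.card_Icc, Int.card_Ioo] at this
      omega
  refine ⟨cc (v I₀) - cc (v (-I₀)), ?_, ?_⟩
  · rcases cc01 (v I₀) with h1 | h1 <;> rcases cc01 (v (-I₀)) with h2 | h2 <;> omega
  · -- the sum over K equals the telescoping sum
    have htel : ∑ i ∈ Finset.Ico (-I₀) I₀, (cc (v (i+1)) - cc (v i)) = cc (v I₀) - cc (v (-I₀)) :=
      telescope (fun j => cc (v j)) (-I₀) I₀ (by omega)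
    have hterm : ∀ i : ℤ, cc (v (i+1)) - cc (v i) =
        cc (v i + stp v (v i)) - cc (v i) := by
      intro i; rw [stp_apply hv.1 i]
    have himg : ∑ i ∈ Finset.Ico (-I₀) I₀, (cc (v (i+1)) - cc (v i)) =
        ∑ x ∈ (Finset.Ico (-I₀) I₀).image v, (cc (x + stp v x) - cc x) := by
      rw [Finset.sum_image (fun x _ y _ h => hv.1.1 h)]
      exact Finset.sum_congr rfl (fun i _ => hterm i)
    have hKsub : K ⊆ (Finset.Ico (-I₀) I₀).image v := by
      intro x hx
      have h1 := hIdx x hx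
      exact Finset.mem_image.mpr ⟨Function.invFun v x, by
        simp only [Finset.mem_Ico]; omega, Function.invFun_eq (hv.1.2 x)⟩
    have hGzero : ∀ x ∈ (Finset.Ico (-I₀) I₀).image v, x ∉ K →
        cc (x + stp v x) - cc x = 0 := by
      intro x _ hx
      simp only [hK, Finset.mem_Icc, not_and_or, not_le] at hx
      rcases stp_mem hv x with hs | hs <;>
      · rw [hs]
        simp only [cc]
        split_ifs <;> omega
    calc ∑ x ∈ K, (cc (x + stp v x) - cc x)
        = ∑ x ∈ (Finset.Ico (-I₀) I₀).image v, (cc (x + stp v x) - cc x) :=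
          Finset.sum_subset hKsub hGzero
      _ = cc (v I₀) - cc (v (-I₀)) := by rw [← himg]; exact htel

lemma dvd_one_of_ham {a b d : ℤ} {v : ℤ → ℤ} (hv : IsZHamPath a b v)
    (hda : d ∣ a) (hdb : d ∣ b) : d ∣ 1 := by
  have hbound : ∀ i : ℤ, v (i+1) - v i = a ∨ v (i+1) - v i = b := by
    intro i; simpa using hv.2 i
  have hdvd : ∀ i : ℤ, d ∣ (v (i+1) - v i) := by
    intro i; rcases hbound i with h | h <;> rw [h] <;> assumption
  have key : ∀ i : ℤ, d ∣ (v i - v 0) := by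
    intro i
    induction i using Int.induction_on with
    | zero => simp
    | succ k ih =>
      have h1 := hdvd (k : ℤ)
      have : v ((k:ℤ) + 1) - v 0 = (v ((k:ℤ)+1) - v (k:ℤ)) + (v (k:ℤ) - v 0) := by ring
      rw [this]; exact dvd_add h1 ih
    | pred k ih =>
      have h1 := hdvd (-(k:ℤ) - 1)
      rw [show -(k:ℤ) - 1 + 1 = -(k:ℤ) by ring] at h1
      have : v (-(k:ℤ) - 1) - v 0 = (v (-(k:ℤ)) - v 0) - (v (-(k:ℤ)) - v (-(k:ℤ) - 1)) := by
        ring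
      rw [this]; exact dvd_sub ih h1
  obtain ⟨i, hi⟩ := hv.1.2 (v 0 + 1)
  have := key i
  rw [hi] at this
  simpa using this

lemma sum_cc {M d : ℤ} (hM : -M ≤ d ∧ d ≤ M) :
    ∑ x ∈ Finset.Icc (-M) (M+1), cc (x + d) = M + 1 + d := by
  have h1 : ∀ x : ℤ, cc (x + d) = if 1 - d ≤ x then 1 else 0 := by
    intro x; unfold cc; split_ifs with h h' h' <;> omega
  rw [Finset.sum_congr rfl (fun x _ => h1 x)]
  rw [Finset.sum_boole]
  have h2 : Finset.filter (fun x => 1 - d ≤ x) (Finset.Icc (-M) (M+1)) =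
      Finset.Icc (1-d) (M+1) := by
    ext x; simp only [Finset.mem_filter, Finset.mem_Icc]; omega
  rw [h2, Int.card_Icc]
  omega

/-- For distinct integers `a`, `b`, the Cayley digraph `Cay(ℤ; a, b)` has two
arc-disjoint two-way infinite hamiltonian paths iff `a` and `b` are odd and either
`{a, b} = {1, −1}` or `a + b = ±2`. -/
theorem arc_disjoint_two_way_infinite_int (a b : ℤ) (hab : a ≠ b) :
    (∃ v v' : ℤ → ℤ, IsZHamPath a b v ∧ IsZHamPath a b v' ∧
        Disjoint (ZArcSet v) (ZArcSet v')) ↔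
      (Odd a ∧ Odd b ∧
        (({a, b} : Set ℤ) = {1, -1} ∨ a + b = 2 ∨ a + b = -2)) := by
  constructor
  · rintro ⟨v, v', hv, hv', hdisj⟩
    set M : ℤ := max |a| |b| with hM
    have hMa : -M ≤ a ∧ a ≤ M := abs_le.mp (le_max_left _ _)
    have hMb : -M ≤ b ∧ b ≤ M := abs_le.mp (le_max_right _ _)
    obtain ⟨ε₁, hε₁, hs₁⟩ := crossing hv hMa hMb
    obtain ⟨ε₂, hε₂, hs₂⟩ := crossing hv' hMa hMb
    have pointwise : ∀ x : ℤ, (cc (x + stp v x) - cc x) + (cc (x + stp v' x) - cc x) =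
        cc (x + a) + cc (x + b) - 2 * cc x := by
      intro x
      have hne : stp v x ≠ stp v' x := by
        intro h
        exact Set.disjoint_left.mp hdisj (mem_arc hv.1 x) (h ▸ mem_arc hv'.1 x)
      rcases stp_mem hv x with h1 | h1 <;> rcases stp_mem hv' x with h2 | h2 <;>
        rw [h1, h2] <;> first
        | (exfalso; exact hne (h1.trans h2.symm) )
        | ring
    have hsum : ε₁ + ε₂ = a + b := by
      have e1 : ∑ x ∈ Finset.Icc (-M) (M+1), cc (x + a) = M + 1 + a := sum_cc hMa
      have e2 : ∑ x ∈ Finset.Icc (-M) (M+1), cc (x + b) = M + 1 + b := sum_cc hMb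
      have e3 : ∑ x ∈ Finset.Icc (-M) (M+1), cc x = M + 1 := by
        have := sum_cc (M := M) (d := 0) ⟨by omega, by omega⟩
        simpa using this
      have s1 : ε₁ + ε₂ = ∑ x ∈ Finset.Icc (-M) (M+1),
          ((cc (x + stp v x) - cc x) + (cc (x + stp v' x) - cc x)) := by
        rw [Finset.sum_add_distrib, hs₁, hs₂]
      have s2 : ∑ x ∈ Finset.Icc (-M) (M+1),
          ((cc (x + stp v x) - cc x) + (cc (x + stp v' x) - cc x)) =
          ∑ x ∈ Finset.Icc (-M) (M+1), (cc (x + a) + cc (x + b) - 2 * cc x) :=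
        Finset.sum_congr rfl (fun x _ => pointwise x)
      have s3 : ∑ x ∈ Finset.Icc (-M) (M+1), (cc (x + a) + cc (x + b) - 2 * cc x) =
          (∑ x ∈ Finset.Icc (-M) (M+1), cc (x + a)) +
          (∑ x ∈ Finset.Icc (-M) (M+1), cc (x + b)) -
          2 * ∑ x ∈ Finset.Icc (-M) (M+1), cc x := by
        rw [Finset.sum_sub_distrib, Finset.sum_add_distrib, Finset.mul_sum]
      rw [s1, s2, s3, e1, e2, e3]
      omega
    have htri : a + b = 2 ∨ a + b = 0 ∨ a + b = -2 := by
      rcases hε₁ with h | h <;> rcases hε₂ with h' | h' <;> omega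
    rcases htri with h2 | h0 | hm2
    · -- a + b = 2
      have h2a : ¬ (2 ∣ a) := by
        intro hda
        have := dvd_one_of_ham hv hda (by omega : 2 ∣ b)
        omega
      have h2b : ¬ (2 ∣ b) := by
        intro hdb
        have := dvd_one_of_ham hv (by omega : 2 ∣ a) hdb
        omega
      exact ⟨Int.odd_iff.mpr (by omega), Int.odd_iff.mpr (by omega), Or.inr (Or.inl h2)⟩
    · -- a + b = 0
      have hd := dvd_one_of_ham hv dvd_rfl (⟨-1, by omega⟩ : a ∣ b)
      have ha1 : a = 1 ∨ a = -1 := Int.isUnit_iff.mp (isUnit_of_dvd_one hd)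
      rcases ha1 with h | h
      · have hb1 : b = -1 := by omega
        subst h; subst hb1
        exact ⟨⟨0, rfl⟩, ⟨-1, by ring⟩, Or.inl rfl⟩
      · have hb1 : b = 1 := by omega
        subst h; subst hb1
        exact ⟨⟨-1, by ring⟩, ⟨0, rfl⟩, Or.inl (Set.pair_comm (-1) 1)⟩
    · -- a + b = -2
      have h2a : ¬ (2 ∣ a) := by
        intro hda
        have := dvd_one_of_ham hv hda (by omega : 2 ∣ b)
        omega
      have h2b : ¬ (2 ∣ b) := by
        intro hdb
        have := dvd_one_of_ham hv (by omega : 2 ∣ a) hdb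
        omega
      exact ⟨Int.odd_iff.mpr (by omega), Int.odd_iff.mpr (by omega), Or.inr (Or.inr hm2)⟩
  · rintro ⟨ha, hb, hcase⟩
    rcases hcase with hset | h2 | hm2
    · have ha1 : a = 1 ∨ a = -1 := by
        have : a ∈ ({1, -1} : Set ℤ) := hset ▸ Set.mem_insert a {b}
        simpa using this
      have hb1 : b = 1 ∨ b = -1 := by
        have : b ∈ ({1, -1} : Set ℤ) := hset ▸ Set.mem_insert_of_mem a rfl
        simpa using this
      rcases ha1 with h | h <;> rcases hb1 with h' | h'
      · exact absurd (h.trans h'.symm) hab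
      · subst h; subst h'; exact construct_pm
      · subst h; subst h'
        obtain ⟨v, v', hv, hv', hd⟩ := construct_pm
        exact ⟨v, v', ham_swap hv, ham_swap hv', hd⟩
      · exact absurd (h.trans h'.symm) hab
    · exact construct hab ha hb 1 (Or.inl rfl) (by omega)
    · exact construct hab ha hb (-1) (Or.inr rfl) (by omega)
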